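/- Let r > 1/2 and let a : ℕ → ℝ be a sequence such that M := ∑_{i=0}^∞ a_i²(1+i²)^r < ∞. Then there exists a constant C > 0 depending only on r such that for every integer p ≥ 1 and every x ∈ [-1,1], the series ∑_{i=p+1}^∞ a_i T_i(x) converges absolutely and |∑_{i=p+1}^∞ a_i T_i(x)| ≤ C · p^{-(r-1/2)} · M^{1/2}. -/

import Mathlib

open Polynomial

theorem cheb_step {s t : ℝ} (hs : 0 < s) (ht : 2 ≤ t) :
    s * t ^ (-(s+1)) ≤ (t-1) ^ (-s) - t ^ (-s) := by
  have ht0 : (0:ℝ) < t := by linarith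
  have htm : (0:ℝ) < t - 1 := by linarith
  have hP : (0:ℝ) < t ^ s := Real.rpow_pos_of_pos ht0 _
  have hQ : (0:ℝ) < (t-1) ^ s := Real.rpow_pos_of_pos htm _
  have hBP : t ^ (-s) = (t ^ s)⁻¹ := Real.rpow_neg ht0.le s
  have hAQ : (t-1) ^ (-s) = ((t-1) ^ s)⁻¹ := Real.rpow_neg htm.le s
  have key1 : t ^ (-(s+1)) = (t ^ s)⁻¹ * t⁻¹ := by
    rw [show -(s+1) = -s + (-1) by ring, Real.rpow_add ht0, Real.rpow_neg_one, hBP]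
  have e1 : s * ((t ^ s)⁻¹ * t⁻¹) = s / (t ^ s * t) := by ring
  have e2 : ((t-1)^s)⁻¹ - (t^s)⁻¹ = (t^s - (t-1)^s)/((t-1)^s * t^s) := by
    field_simp
  have hQP : (t-1)^s ≤ t^s := Real.rpow_le_rpow htm.le (by linarith) hs.le
  rw [key1, hBP, hAQ, e1, e2, div_le_div_iff₀ (by positivity) (by positivity)]
  have h10 : s * (t-1)^s ≤ t * t^s - t * (t-1)^s := by
    rcases le_total 1 s with hs1 | hs1
    · have hm1 : (-1:ℝ) ≤ 1/(t-1) := by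
        have : (0:ℝ) ≤ 1/(t-1) := by positivity
        linarith
      have hber := one_add_mul_self_le_rpow_one_add hm1 hs1
      have heq : (1:ℝ) + 1/(t-1) = t / (t-1) := by field_simp; ring
      rw [heq, Real.div_rpow ht0.le htm.le s] at hber
      have h4 : (1 + s * (1/(t-1))) * ((t-1)^s) ≤ t^s := by
        rw [← le_div_iff₀ hQ]; exact hber
      have h4' : (1 + s * (1/t)) * ((t-1)^s) ≤ t^s := by
        refine le_trans (mul_le_mul_of_nonneg_right ?_ hQ.le) h4
        have : s * (1/t) ≤ s * (1/(t-1)) := by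
          apply mul_le_mul_of_nonneg_left _ hs.le
          apply div_le_div_of_nonneg_left (by norm_num) htm (by linarith)
        linarith
      have h8 : t * ((1 + s*(1/t)) * ((t-1)^s)) ≤ t * t^s :=
        mul_le_mul_of_nonneg_left h4' ht0.le
      have h9 : t * ((1 + s*(1/t)) * ((t-1)^s)) = t*(t-1)^s + s*(t-1)^s := by
        field_simp
      linarith
    · have hm1 : (-1:ℝ) ≤ -(1/t) := by
        rw [neg_le_neg_iff]
        exact div_le_one_of_le₀ (by linarith) ht0.le
      have hber := rpow_one_add_le_one_add_mul_self hm1 hs.le hs1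
      have heq : (1:ℝ) + -(1/t) = (t-1) / t := by field_simp; linarith
      rw [heq, Real.div_rpow htm.le ht0.le s] at hber
      have h4 : (t-1)^s ≤ (1 + s * (-(1/t))) * t^s := by
        rw [div_le_iff₀ hP] at hber; exact hber
      have h8 : t * ((t-1)^s) ≤ t * ((1 + s * (-(1/t))) * t^s) :=
        mul_le_mul_of_nonneg_left h4 ht0.le
      have h9 : t * ((1 + s * (-(1/t))) * t^s) = t*t^s - s*t^s := by
        field_simp; ring
      have h11 : s * (t-1)^s ≤ s * t^s := mul_le_mul_of_nonneg_left hQP hs.le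
      linarith
  calc s * ((t-1)^s * t^s) = (s * (t-1)^s) * t^s := by ring
    _ ≤ (t * t^s - t * (t-1)^s) * t^s := mul_le_mul_of_nonneg_right h10 hP.le
    _ = (t^s - (t-1)^s) * (t^s * t) := by ring

set_option maxHeartbeats 1000000 in
/-- Let `r > 1/2`. There is a constant `C > 0` depending only on `r` such that for every
real sequence `a` with `M := ∑_{i=0}^∞ a_i² (1+i²)^r < ∞`, every integer `p ≥ 1` and every
`x ∈ [-1,1]`, the tail of the Chebyshev expansion `∑_{i=p+1}^∞ a_i T_i(x)` converges
absolutely and `|∑_{i=p+1}^∞ a_i T_i(x)| ≤ C · p^{-(r-1/2)} · M^{1/2}`. -/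
theorem chebyshev_tail_uniform_bound (r : ℝ) (hr : 1 / 2 < r) :
    ∃ C : ℝ, 0 < C ∧ ∀ a : ℕ → ℝ,
      Summable (fun i : ℕ => (a i) ^ 2 * ((1 : ℝ) + (i : ℝ) ^ 2) ^ r) →
      ∀ p : ℕ, 1 ≤ p → ∀ x : ℝ, x ∈ Set.Icc (-1 : ℝ) 1 →
        Summable (fun i : ℕ =>
          |a (p + 1 + i) * (Polynomial.Chebyshev.T ℝ ((p + 1 + i : ℕ) : ℤ)).eval x|) ∧
        |∑' i : ℕ, a (p + 1 + i) * (Polynomial.Chebyshev.T ℝ ((p + 1 + i : ℕ) : ℤ)).eval x| ≤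
          C * (p : ℝ) ^ (-(r - 1 / 2)) *
            Real.sqrt (∑' i : ℕ, (a i) ^ 2 * ((1 : ℝ) + (i : ℝ) ^ 2) ^ r) := by
  have hs : (0:ℝ) < 2*r - 1 := by linarith
  refine ⟨Real.sqrt (2*r-1)⁻¹, Real.sqrt_pos.2 (by positivity), ?_⟩
  intro a hM p hp x hx
  obtain ⟨hx1, hx2⟩ := hx
  set F2 : ℕ → ℝ := fun n => a n ^ 2 * ((1:ℝ) + (n:ℝ)^2) ^ r with hF2
  set G2 : ℕ → ℝ := fun n => ((1:ℝ) + (n:ℝ)^2) ^ (-r) with hG2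
  set M : ℝ := ∑' i, F2 i with hMdef
  have hMnn : 0 ≤ M := tsum_nonneg fun i => by positivity
  -- Chebyshev polynomials bounded by 1 on [-1,1]
  have hT : ∀ n : ℤ, |(Polynomial.Chebyshev.T ℝ n).eval x| ≤ 1 := by
    intro n
    have hxcos : Real.cos (Real.arccos x) = x := Real.cos_arccos hx1 hx2
    rw [← hxcos, Polynomial.Chebyshev.T_real_cos]
    exact Real.abs_cos_le_one _
  have habs : ∀ n : ℕ, |a n| = Real.sqrt (F2 n) * Real.sqrt (G2 n) := by
    intro n
    rw [← Real.sqrt_mul (by positivity)]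
    have h1 : ((1:ℝ)+(n:ℝ)^2)^r * ((1:ℝ)+(n:ℝ)^2)^(-r) = 1 := by
      rw [← Real.rpow_add (by positivity)]; simp
    have h2 : F2 n * G2 n = a n ^ 2 := by
      rw [hF2, hG2]; dsimp only; rw [mul_assoc, h1, mul_one]
    rw [h2, Real.sqrt_sq_eq_abs]
  -- tail bound for the weights
  have hGsum : ∀ n : ℕ, ∑ i ∈ Finset.range n, G2 (p+1+i) ≤
      (2*r-1)⁻¹ * (p:ℝ) ^ (-(2*r-1)) := by
    intro n
    set g0 : ℕ → ℝ := fun i => ((p+i : ℕ):ℝ) ^ (-(2*r-1)) with hg0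
    have hterm : ∀ i : ℕ, G2 (p+1+i) ≤ (2*r-1)⁻¹ * (g0 i - g0 (i+1)) := by
      intro i
      set t : ℝ := ((p+1+i : ℕ):ℝ) with htdef
      have ht2 : (2:ℝ) ≤ t := by
        rw [htdef]
        have h22 : 2 ≤ p+1+i := by omega
        exact_mod_cast h22
      have ht0 : (0:ℝ) < t := by linarith
      have hstep := cheb_step hs ht2
      have htm1 : t - 1 = ((p+i : ℕ):ℝ) := by rw [htdef]; push_cast; ring
      have hg0i : g0 i = (t-1) ^ (-(2*r-1)) := by rw [hg0, htm1]
      have hg0i1 : g0 (i+1) = t ^ (-(2*r-1)) := by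
        simp only [hg0, htdef]
        rw [show p+(i+1) = p+1+i from by omega]
      have hG2le : G2 (p+1+i) ≤ t ^ (-(2*r-1+1)) := by
        have h1 : G2 (p+1+i) ≤ (t^2) ^ (-r) := by
          rw [hG2]; dsimp only
          apply Real.rpow_le_rpow_of_nonpos (by positivity) (by rw [htdef]; nlinarith) (by linarith)
        have h2 : (t^2 : ℝ) ^ (-r) = t ^ (-(2*r-1+1)) := by
          rw [← Real.rpow_natCast t 2, ← Real.rpow_mul ht0.le]
          congr 1; push_cast; ring
        rw [← h2]; exact h1
      have h3 : (2*r-1) * G2 (p+1+i) ≤ (t-1)^(-(2*r-1)) - t^(-(2*r-1)) :=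
        le_trans (mul_le_mul_of_nonneg_left hG2le hs.le) hstep
      rw [hg0i, hg0i1]
      calc G2 (p+1+i) = (2*r-1)⁻¹ * ((2*r-1) * G2 (p+1+i)) := by field_simp
        _ ≤ (2*r-1)⁻¹ * ((t-1)^(-(2*r-1)) - t^(-(2*r-1))) :=
            mul_le_mul_of_nonneg_left h3 (by positivity)
    calc ∑ i ∈ Finset.range n, G2 (p+1+i)
        ≤ ∑ i ∈ Finset.range n, (2*r-1)⁻¹ * (g0 i - g0 (i+1)) :=
          Finset.sum_le_sum fun i _ => hterm i
      _ = (2*r-1)⁻¹ * (g0 0 - g0 n) := by rw [← Finset.mul_sum, Finset.sum_range_sub']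
      _ ≤ (2*r-1)⁻¹ * g0 0 := by
          have : 0 ≤ g0 n := Real.rpow_nonneg (by positivity) _
          have h0 : (0:ℝ) ≤ (2*r-1)⁻¹ := by positivity
          nlinarith
      _ = (2*r-1)⁻¹ * (p:ℝ) ^ (-(2*r-1)) := by rw [hg0]; norm_num
  -- partial sums of |a_i T_i| are bounded
  have hp0 : (0:ℝ) < (p:ℝ) := by exact_mod_cast hp
  have key : ∀ n : ℕ, ∑ i ∈ Finset.range n,
      |a (p + 1 + i) * (Polynomial.Chebyshev.T ℝ ((p + 1 + i : ℕ) : ℤ)).eval x| ≤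
      Real.sqrt (2*r-1)⁻¹ * (p:ℝ) ^ (-(r - 1/2)) * Real.sqrt M := by
    intro n
    have step1 : ∀ i : ℕ, |a (p+1+i) * (Polynomial.Chebyshev.T ℝ ((p+1+i : ℕ) : ℤ)).eval x| ≤
        Real.sqrt (F2 (p+1+i)) * Real.sqrt (G2 (p+1+i)) := by
      intro i
      rw [abs_mul, ← habs]
      exact mul_le_of_le_one_right (abs_nonneg _) (hT _)
    have hFsum : ∑ i ∈ Finset.range n, F2 (p+1+i) ≤ M := by
      calc ∑ i ∈ Finset.range n, F2 (p+1+i)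
          = ∑ j ∈ (Finset.range n).image (fun i => p+1+i), F2 j := by
            rw [Finset.sum_image (fun i hi j hj h => by simpa using h)]
        _ ≤ M := Summable.sum_le_tsum _ (fun i _ => by positivity) hM
    calc ∑ i ∈ Finset.range n, |a (p + 1 + i) * (Polynomial.Chebyshev.T ℝ ((p + 1 + i : ℕ) : ℤ)).eval x|
        ≤ ∑ i ∈ Finset.range n, Real.sqrt (F2 (p+1+i)) * Real.sqrt (G2 (p+1+i)) :=
          Finset.sum_le_sum fun i _ => step1 i
      _ ≤ Real.sqrt (∑ i ∈ Finset.range n, F2 (p+1+i)) *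
            Real.sqrt (∑ i ∈ Finset.range n, G2 (p+1+i)) :=
          Real.sum_sqrt_mul_sqrt_le _ (fun i => by positivity) (fun i => by positivity)
      _ ≤ Real.sqrt M * Real.sqrt ((2*r-1)⁻¹ * (p:ℝ) ^ (-(2*r-1))) := by
          apply mul_le_mul (Real.sqrt_le_sqrt hFsum) (Real.sqrt_le_sqrt (hGsum n))
            (Real.sqrt_nonneg _) (Real.sqrt_nonneg _)
      _ = Real.sqrt (2*r-1)⁻¹ * (p:ℝ) ^ (-(r - 1/2)) * Real.sqrt M := by
          rw [Real.sqrt_mul (by positivity)]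
          have : Real.sqrt ((p:ℝ) ^ (-(2*r-1))) = (p:ℝ) ^ (-(r-1/2)) := by
            rw [Real.sqrt_eq_rpow, ← Real.rpow_mul hp0.le]
            congr 1; ring
          rw [this]; ring
  have hsummable : Summable (fun i : ℕ =>
      |a (p + 1 + i) * (Polynomial.Chebyshev.T ℝ ((p + 1 + i : ℕ) : ℤ)).eval x|) :=
    summable_of_sum_range_le (fun n => abs_nonneg _) key
  refine ⟨hsummable, ?_⟩
  have hsum2 : Summable (fun i : ℕ =>
      a (p + 1 + i) * (Polynomial.Chebyshev.T ℝ ((p + 1 + i : ℕ) : ℤ)).eval x) :=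
    hsummable.of_abs
  calc |∑' i : ℕ, a (p + 1 + i) * (Polynomial.Chebyshev.T ℝ ((p + 1 + i : ℕ) : ℤ)).eval x|
      ≤ ∑' i : ℕ, |a (p + 1 + i) * (Polynomial.Chebyshev.T ℝ ((p + 1 + i : ℕ) : ℤ)).eval x| := by
        have h := norm_tsum_le_tsum_norm (f := fun i : ℕ =>
            a (p + 1 + i) * (Polynomial.Chebyshev.T ℝ ((p + 1 + i : ℕ) : ℤ)).eval x)
          (by simp only [Real.norm_eq_abs]; exact hsummable)
        simp only [Real.norm_eq_abs] at h
        exact h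
    _ ≤ Real.sqrt (2*r-1)⁻¹ * (p:ℝ) ^ (-(r - 1/2)) * Real.sqrt M :=
        Real.tsum_le_of_sum_range_le (fun n => abs_nonneg _) key
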